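/- Let V : ℝ → ℝ be four times continuously differentiable with V(−1) = V(1) = 0. Then ∫_{−1}^{1} z·(d/dz)(V‴(z)·V(z)) dz = (1/2)·(V′(1)² − V′(−1)²). -/

import Mathlib

theorem stmt_11 (V : ℝ → ℝ) (hV : ContDiff ℝ 4 V)
    (hVm : V (-1) = 0) (hVp : V 1 = 0) :
    (∫ z in (-1 : ℝ)..1, z * deriv (fun t => deriv^[3] V t * V t) z)
      = (1 / 2) * ((deriv V 1) ^ 2 - (deriv V (-1)) ^ 2) := by
  set V1 := deriv V with hV1
  set V2 := deriv V1 with hV2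
  set V3 := deriv V2 with hV3
  have h3 : deriv^[3] V = V3 := rfl
  have c1 : ContDiff ℝ 3 V1 := by
    have := hV.iterate_deriv' 3 1
    norm_num at this
    simpa using this
  have c2 : ContDiff ℝ 2 V2 := by
    have := c1.iterate_deriv' 2 1
    norm_num at this
    simpa using this
  have c3 : ContDiff ℝ 1 V3 := by
    have := c2.iterate_deriv' 1 1
    norm_num at this
    simpa using this
  have dV : Differentiable ℝ V := hV.differentiable (by norm_num)
  have dV1 : Differentiable ℝ V1 := c1.differentiable (by norm_num)
  have dV2 : Differentiable ℝ V2 := c2.differentiable (by norm_num)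
  have dV3 : Differentiable ℝ V3 := c3.differentiable one_ne_zero
  have cV : Continuous V := hV.continuous
  have cV1 : Continuous V1 := c1.continuous
  have cV2 : Continuous V2 := c2.continuous
  have cV3 : Continuous V3 := c3.continuous
  have cV4 : Continuous (deriv V3) := c3.continuous_deriv le_rfl
  set v : ℝ → ℝ := fun t => V3 t * V t with hv
  have hvd : ∀ x : ℝ, HasDerivAt v (deriv V3 x * V x + V3 x * V1 x) x :=
    fun x => ((dV3 x).hasDerivAt).mul ((dV x).hasDerivAt)
  have hderiv : ∀ x : ℝ, deriv v x = deriv V3 x * V x + V3 x * V1 x :=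
    fun x => (hvd x).deriv
  -- Step 1
  have step1 : (∫ z in (-1 : ℝ)..1, z * deriv v z)
      = - ∫ z in (-1 : ℝ)..1, V3 z * V z := by
    have h := intervalIntegral.integral_mul_deriv_eq_deriv_mul
      (u := fun z : ℝ => z) (u' := fun _ => (1 : ℝ)) (v := v)
      (v' := fun x => deriv V3 x * V x + V3 x * V1 x)
      (a := (-1 : ℝ)) (b := 1)
      (fun x _ => hasDerivAt_id x) (fun x _ => hvd x)
      (continuous_const.intervalIntegrable _ _)
      (((cV4.mul cV).add (cV3.mul cV1)).intervalIntegrable _ _)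
    have h' : (∫ z in (-1 : ℝ)..1, z * deriv v z)
        = ∫ z in (-1 : ℝ)..1, z * (deriv V3 z * V z + V3 z * V1 z) := by
      apply intervalIntegral.integral_congr
      intro x _
      simp only [hderiv]
    rw [h', h]
    simp [hv, hVm, hVp]
  -- Step 2
  have step2 : (∫ z in (-1 : ℝ)..1, V z * V3 z)
      = - ∫ z in (-1 : ℝ)..1, V1 z * V2 z := by
    have h := intervalIntegral.integral_mul_deriv_eq_deriv_mul
      (u := V) (u' := V1) (v := V2) (v' := V3)
      (a := (-1 : ℝ)) (b := 1)
      (fun x _ => (dV x).hasDerivAt) (fun x _ => (dV2 x).hasDerivAt)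
      (cV1.intervalIntegrable _ _) (cV3.intervalIntegrable _ _)
    rw [h, hVm, hVp]
    ring
  -- Step 3
  have step3 : (∫ z in (-1 : ℝ)..1, V1 z * V2 z)
      = (1 / 2) * ((V1 1) ^ 2 - (V1 (-1)) ^ 2) := by
    have h := intervalIntegral.integral_mul_deriv_eq_deriv_mul
      (u := V1) (u' := V2) (v := V1) (v' := V2)
      (a := (-1 : ℝ)) (b := 1)
      (fun x _ => (dV1 x).hasDerivAt) (fun x _ => (dV1 x).hasDerivAt)
      (cV2.intervalIntegrable _ _) (cV2.intervalIntegrable _ _)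
    have hc : (∫ z in (-1 : ℝ)..1, V2 z * V1 z)
        = ∫ z in (-1 : ℝ)..1, V1 z * V2 z := by
      apply intervalIntegral.integral_congr
      intro x _
      ring
    rw [hc] at h
    nlinarith [h]
  have hcomm : (∫ z in (-1 : ℝ)..1, V3 z * V z)
      = ∫ z in (-1 : ℝ)..1, V z * V3 z := by
    apply intervalIntegral.integral_congr
    intro x _
    ring
  calc (∫ z in (-1 : ℝ)..1, z * deriv (fun t => deriv^[3] V t * V t) z)
      = ∫ z in (-1 : ℝ)..1, z * deriv v z := by rw [hv, h3]
    _ = - ∫ z in (-1 : ℝ)..1, V3 z * V z := step1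
    _ = - ∫ z in (-1 : ℝ)..1, V z * V3 z := by rw [hcomm]
    _ = ∫ z in (-1 : ℝ)..1, V1 z * V2 z := by rw [step2]; ring
    _ = (1 / 2) * ((deriv V 1) ^ 2 - (deriv V (-1)) ^ 2) := step3
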